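/- Let k₁ > k₂ > 0, let b₁, b₂, ψ₂ ∈ ℝ, set H = (k₁ − k₂)/(k₁ + k₂), and define ξᵢ(y) = kᵢ·y + bᵢ for i = 1, 2. Then for all y ∈ ℝ, Wr₃( 1 + e^{2ξ₂ − ψ₂}, (1 + H²·e^{2ξ₂ − ψ₂})·e^{ξ₁}, e^{ξ₂} )(y) = k₁·k₂·(k₁ + k₂)·H·e^{ξ₁(y) + ξ₂(y)}·( e^{2ξ₂(y) − ψ₂} + 1 )·( H·e^{2ξ₂(y) − ψ₂} − 1 ). -/

import Mathlib

private lemma dexp (a b : ℝ) :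
    deriv (fun y : ℝ => Real.exp (a * y + b)) = fun y => a * Real.exp (a * y + b) := by
  funext y
  have h : HasDerivAt (fun y : ℝ => Real.exp (a * y + b))
      (Real.exp (a * y + b) * a) y := by
    have h1 : HasDerivAt (fun y : ℝ => a * y + b) (a * 1) y :=
      ((hasDerivAt_id y).const_mul a).add_const b
    simpa using h1.exp
  rw [h.deriv]; ring

private lemma dmexp (c a b : ℝ) :
    deriv (fun y : ℝ => c * Real.exp (a * y + b)) = fun y => c * a * Real.exp (a * y + b) := by
  funext y
  have h : HasDerivAt (fun y : ℝ => Real.exp (a * y + b))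
      (Real.exp (a * y + b) * a) y := by
    simpa using (((hasDerivAt_id y).const_mul a).add_const b).exp
  rw [(h.const_mul c).deriv]; ring

private lemma dcexp (c a b : ℝ) :
    deriv (fun y : ℝ => c + Real.exp (a * y + b)) = fun y => a * Real.exp (a * y + b) := by
  funext y
  have h : HasDerivAt (fun y : ℝ => Real.exp (a * y + b))
      (Real.exp (a * y + b) * a) y := by
    have h1 : HasDerivAt (fun y : ℝ => a * y + b) (a * 1) y :=
      ((hasDerivAt_id y).const_mul a).add_const b
    simpa using h1.exp
  rw [(h.const_add c).deriv]; ring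

private lemma dsum (c₁ a₁ b₁ c₂ a₂ b₂ : ℝ) :
    deriv (fun y : ℝ => c₁ * Real.exp (a₁ * y + b₁) + c₂ * Real.exp (a₂ * y + b₂))
      = fun y => c₁ * a₁ * Real.exp (a₁ * y + b₁) + c₂ * a₂ * Real.exp (a₂ * y + b₂) := by
  funext y
  have h1 : HasDerivAt (fun y : ℝ => Real.exp (a₁ * y + b₁))
      (Real.exp (a₁ * y + b₁) * a₁) y := by
    simpa using (((hasDerivAt_id y).const_mul a₁).add_const b₁).exp
  have h2 : HasDerivAt (fun y : ℝ => Real.exp (a₂ * y + b₂))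
      (Real.exp (a₂ * y + b₂) * a₂) y := by
    simpa using (((hasDerivAt_id y).const_mul a₂).add_const b₂).exp
  have h : HasDerivAt
      (fun y : ℝ => c₁ * Real.exp (a₁ * y + b₁) + c₂ * Real.exp (a₂ * y + b₂))
      (c₁ * (Real.exp (a₁ * y + b₁) * a₁) + c₂ * (Real.exp (a₂ * y + b₂) * a₂)) y :=
    (h1.const_mul c₁).add (h2.const_mul c₂)
  rw [h.deriv]; ring

/-- explicit evaluation of the third-order Wronskian `J₁`
appearing in the count of negative eigenvalues of the Hessian. -/
theorem wronskian_J1 (k₁ k₂ b₁ b₂ ψ₂ H : ℝ)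
    (hk₂ : 0 < k₂) (hk : k₂ < k₁)
    (hH : H = (k₁ - k₂) / (k₁ + k₂))
    (ξ₁ ξ₂ : ℝ → ℝ)
    (hξ₁ : ∀ y, ξ₁ y = k₁ * y + b₁) (hξ₂ : ∀ y, ξ₂ y = k₂ * y + b₂)
    (f₁ f₂ f₃ : ℝ → ℝ)
    (hf₁ : ∀ y, f₁ y = 1 + Real.exp (2 * ξ₂ y - ψ₂))
    (hf₂ : ∀ y, f₂ y = (1 + H ^ 2 * Real.exp (2 * ξ₂ y - ψ₂)) * Real.exp (ξ₁ y))
    (hf₃ : ∀ y, f₃ y = Real.exp (ξ₂ y)) :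
    ∀ y : ℝ,
      Matrix.det !![f₁ y, f₂ y, f₃ y;
                    deriv f₁ y, deriv f₂ y, deriv f₃ y;
                    deriv (deriv f₁) y, deriv (deriv f₂) y, deriv (deriv f₃) y]
        = k₁ * k₂ * (k₁ + k₂) * H * Real.exp (ξ₁ y + ξ₂ y)
            * (Real.exp (2 * ξ₂ y - ψ₂) + 1)
            * (H * Real.exp (2 * ξ₂ y - ψ₂) - 1) := by
  have hF₁ : f₁ = fun y => 1 + Real.exp (2 * k₂ * y + (2 * b₂ - ψ₂)) := by
    funext y; rw [hf₁, hξ₂]; ring_nf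
  have hF₂ : f₂ = fun y =>
      1 * Real.exp (k₁ * y + b₁) + H ^ 2 * Real.exp ((k₁ + 2 * k₂) * y + (b₁ + 2 * b₂ - ψ₂)) := by
    funext y
    have e : Real.exp ((k₁ + 2 * k₂) * y + (b₁ + 2 * b₂ - ψ₂))
        = Real.exp (2 * (k₂ * y + b₂) - ψ₂) * Real.exp (k₁ * y + b₁) := by
      rw [← Real.exp_add]; congr 1; ring
    rw [hf₂, hξ₁, hξ₂, e]; ring
  have hF₃ : f₃ = fun y => Real.exp (k₂ * y + b₂) := by
    funext y; rw [hf₃, hξ₂]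
  have hd₁ : deriv f₁ = fun y => 2 * k₂ * Real.exp (2 * k₂ * y + (2 * b₂ - ψ₂)) := by
    rw [hF₁, dcexp]
  have hdd₁ : deriv (deriv f₁)
      = fun y => 2 * k₂ * (2 * k₂) * Real.exp (2 * k₂ * y + (2 * b₂ - ψ₂)) := by
    rw [hd₁, dmexp]
  have hd₂ : deriv f₂ = fun y =>
      1 * k₁ * Real.exp (k₁ * y + b₁)
      + H ^ 2 * (k₁ + 2 * k₂) * Real.exp ((k₁ + 2 * k₂) * y + (b₁ + 2 * b₂ - ψ₂)) := by
    rw [hF₂, dsum]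
  have hdd₂ : deriv (deriv f₂) = fun y =>
      1 * k₁ * k₁ * Real.exp (k₁ * y + b₁)
      + H ^ 2 * (k₁ + 2 * k₂) * (k₁ + 2 * k₂)
        * Real.exp ((k₁ + 2 * k₂) * y + (b₁ + 2 * b₂ - ψ₂)) := by
    rw [hd₂, dsum]
  have hd₃ : deriv f₃ = fun y => k₂ * Real.exp (k₂ * y + b₂) := by
    rw [hF₃]; have := dexp k₂ b₂; simpa using this
  have hdd₃ : deriv (deriv f₃) = fun y => k₂ * k₂ * Real.exp (k₂ * y + b₂) := by
    rw [hd₃, dmexp]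
  intro y
  have hsplit : Real.exp ((k₁ + 2 * k₂) * y + (b₁ + 2 * b₂ - ψ₂))
      = Real.exp (k₁ * y + b₁) * Real.exp (2 * k₂ * y + (2 * b₂ - ψ₂)) := by
    rw [← Real.exp_add]; congr 1; ring
  have hrhs1 : Real.exp (ξ₁ y + ξ₂ y)
      = Real.exp (k₁ * y + b₁) * Real.exp (k₂ * y + b₂) := by
    rw [hξ₁, hξ₂, ← Real.exp_add]
  have hrhs2 : Real.exp (2 * ξ₂ y - ψ₂) = Real.exp (2 * k₂ * y + (2 * b₂ - ψ₂)) := by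
    rw [hξ₂]; congr 1; ring
  rw [Matrix.det_fin_three]
  rw [hdd₁, hdd₂, hdd₃, hd₁, hd₂, hd₃, hF₁, hF₂, hF₃]
  simp only [Matrix.of_apply, Matrix.cons_val', Matrix.cons_val_zero, Matrix.cons_val_one, Matrix.head_cons,
    Matrix.empty_val', Matrix.cons_val_fin_one, Matrix.head_fin_const, Matrix.cons_val_two,
    Matrix.tail_cons]
  simp only [hsplit, hrhs1, hrhs2]
  set u := Real.exp (k₁ * y + b₁)
  set v := Real.exp (k₂ * y + b₂)
  set w := Real.exp (2 * k₂ * y + (2 * b₂ - ψ₂))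
  have hne : k₁ + k₂ ≠ 0 := by nlinarith
  subst hH
  field_simp
  ring
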